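/- Let f be continuous on [-1,1] with degree-n Chebyshev truncation f_n (partial sum of its Chebyshev series) and best uniform polynomial approximation p_n* of degree n, for n > 1. Then ‖f - f_n‖_∞ ≤ (4 + (4/π²) ln n) ‖f - p_n*‖_∞. -/

import Mathlib

open Real MeasureTheory

lemma cheb_cos_image_Ioo : Real.cos '' Set.Ioo 0 π = Set.Ioo (-1:ℝ) 1 := by
  ext x
  constructor
  · rintro ⟨θ, ⟨h0, hπ⟩, rfl⟩
    constructor
    · have := Real.strictAntiOn_cos ⟨h0.le, hπ.le⟩ ⟨Real.pi_pos.le, le_refl π⟩ hπ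
      simpa [Real.cos_pi] using this
    · have := Real.strictAntiOn_cos ⟨le_refl 0, Real.pi_pos.le⟩ ⟨h0.le, hπ.le⟩ h0
      simpa [Real.cos_zero] using this
  · rintro ⟨h1, h2⟩
    exact ⟨Real.arccos x, ⟨Real.arccos_pos.mpr h2, lt_of_le_of_ne (Real.arccos_le_pi x)
      (by intro h; have := Real.cos_arccos h1.le h2.le; rw [h, Real.cos_pi] at this; linarith)⟩,
      Real.cos_arccos h1.le h2.le⟩

lemma cheb_subst (h : ℝ → ℝ) :
    ∫ x in (-1:ℝ)..1, h x / Real.sqrt (1 - x^2) = ∫ θ in (0:ℝ)..π, h (Real.cos θ) := by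
  rw [intervalIntegral.integral_of_le (by norm_num : (-1:ℝ) ≤ 1),
    intervalIntegral.integral_of_le Real.pi_pos.le,
    MeasureTheory.integral_Ioc_eq_integral_Ioo, MeasureTheory.integral_Ioc_eq_integral_Ioo]
  have key := MeasureTheory.integral_image_eq_integral_abs_deriv_smul measurableSet_Ioo
    (f := Real.cos) (f' := fun t => -Real.sin t) (s := Set.Ioo 0 π)
    (fun t _ => (Real.hasDerivAt_cos t).hasDerivWithinAt)
    (Real.injOn_cos.mono Set.Ioo_subset_Icc_self)
    (fun x => h x / Real.sqrt (1 - x^2))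
  rw [cheb_cos_image_Ioo] at key
  rw [key]
  apply MeasureTheory.setIntegral_congr_fun measurableSet_Ioo
  intro t ht
  have hsin : 0 < Real.sin t := Real.sin_pos_of_pos_of_lt_pi ht.1 ht.2
  have h1 : Real.sqrt (1 - Real.cos t ^ 2) = Real.sin t := by
    rw [← Real.sin_sq t, Real.sqrt_sq hsin.le]
  simp only [smul_eq_mul, h1, abs_neg, abs_of_pos hsin]
  field_simp
open Real Polynomial Polynomial.Chebyshev

lemma cheb_T_aux : ∀ m : ℕ, (T ℝ m).degree ≤ m ∧ (T ℝ m).coeff m = 2^(m-1) := by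
  intro m
  induction m using Nat.strong_induction_on with
  | _ m ih =>
    match m with
    | 0 => simp [T_zero]
    | 1 => simp [T_one]
    | (m+2) =>
      have h1 := ih (m+1) (by omega)
      have h0 := ih m (by omega)
      have hT : T ℝ ((m+2 : ℕ) : ℤ) = C 2 * (X * T ℝ ((m+1 : ℕ) : ℤ)) - T ℝ (m : ℕ) := by
        push_cast
        rw [T_add_two ℝ (m : ℤ), map_ofNat Polynomial.C 2]
        ring
      have hdX : (X * T ℝ ((m+1 : ℕ) : ℤ)).degree ≤ ((m+2 : ℕ) : WithBot ℕ) := by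
        refine le_trans (Polynomial.degree_mul_le _ _) ?_
        rw [Polynomial.degree_X]
        calc (1 : WithBot ℕ) + (T ℝ ((m+1 : ℕ) : ℤ)).degree ≤ 1 + ((m+1 : ℕ) : WithBot ℕ) :=
              add_le_add_right h1.1 _
          _ = ((m+2 : ℕ) : WithBot ℕ) := by push_cast; ring
      constructor
      · rw [hT]
        refine le_trans (Polynomial.degree_sub_le _ _) ?_
        rw [sup_le_iff]
        constructor
        · refine le_trans (Polynomial.degree_mul_le _ _) ?_
          refine le_trans (add_le_add_left Polynomial.degree_C_le _) ?_
          rw [zero_add]; exact hdX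
        · refine le_trans h0.1 ?_
          exact_mod_cast Nat.le_add_right m 2
      · rw [hT, Polynomial.coeff_sub, Polynomial.coeff_C_mul]
        have e1 : (X * T ℝ ((m+1 : ℕ) : ℤ)).coeff (m+2) = (T ℝ ((m+1 : ℕ) : ℤ)).coeff (m+1) :=
          Polynomial.coeff_X_mul _ _
        have e2 : (T ℝ (m : ℕ)).coeff (m+2) = 0 := by
          apply Polynomial.coeff_eq_zero_of_degree_lt
          refine lt_of_le_of_lt h0.1 ?_
          exact_mod_cast Nat.lt_add_of_pos_right (by norm_num)
        rw [e1, e2, h1.2]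
        simp
        ring

lemma cheb_rep : ∀ (n : ℕ) (p : Polynomial ℝ), p.degree ≤ n →
    ∃ c : ℕ → ℝ, p = ∑ k ∈ Finset.range (n+1), C (c k) * T ℝ k := by
  intro n
  induction n with
  | zero =>
    intro p hp
    refine ⟨fun _ => p.coeff 0, ?_⟩
    have h := Polynomial.eq_C_of_degree_le_zero (p := p) (by exact_mod_cast hp)
    simpa [T_zero] using h
  | succ n ihn =>
    intro p hp
    set a : ℝ := p.coeff (n+1) / 2^n with ha
    set q : Polynomial ℝ := p - C a * T ℝ ((n+1 : ℕ) : ℤ) with hq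
    have hqdeg : q.degree ≤ n := by
      rw [Polynomial.degree_le_iff_coeff_zero]
      intro m hm
      have hm' : n < m := by exact_mod_cast hm
      rw [hq, Polynomial.coeff_sub, Polynomial.coeff_C_mul]
      rcases eq_or_lt_of_le (show n + 1 ≤ m by omega) with h | h
      · rw [← h, (cheb_T_aux (n+1)).2]
        simp only [ha, Nat.add_sub_cancel]
        field_simp
        ring
      · have hz1 : p.coeff m = 0 := by
          apply Polynomial.coeff_eq_zero_of_degree_lt
          exact lt_of_le_of_lt hp (by exact_mod_cast Nat.cast_lt.mpr h)
        have hz2 : (T ℝ ((n+1 : ℕ) : ℤ)).coeff m = 0 := by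
          apply Polynomial.coeff_eq_zero_of_degree_lt
          exact lt_of_le_of_lt (cheb_T_aux (n+1)).1 (by exact_mod_cast Nat.cast_lt.mpr h)
        rw [hz1, hz2]; ring
    obtain ⟨c, hc⟩ := ihn q hqdeg
    refine ⟨Function.update c (n+1) a, ?_⟩
    rw [Finset.sum_range_succ]
    have hsame : Function.update c (n+1) a (n+1) = a := Function.update_self _ _ _
    have hrest : ∑ k ∈ Finset.range (n+1), C (Function.update c (n+1) a k) * T ℝ k
        = ∑ k ∈ Finset.range (n+1), C (c k) * T ℝ k := by
      apply Finset.sum_congr rfl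
      intro k hk
      rw [Function.update_of_ne (by simp at hk; omega) _ _]
    rw [hsame, hrest, ← hc, hq]
    ring
open Real MeasureTheory intervalIntegral

lemma cheb_integral_cos_mul {c : ℝ} (hc : c ≠ 0) :
    ∫ t in (0:ℝ)..π, Real.cos (c*t) = Real.sin (c*π)/c := by
  rw [intervalIntegral.integral_comp_mul_left (fun x => Real.cos x) hc]
  simp [integral_cos]
  ring

lemma cheb_orth (j k : ℕ) : ∫ t in (0:ℝ)..π, Real.cos (j*t) * Real.cos (k*t)
    = if j = k then (if j = 0 then π else π/2) else 0 := by
  have hid : ∀ t : ℝ, Real.cos (j*t) * Real.cos (k*t)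
      = (Real.cos (((j:ℝ)+k)*t) + Real.cos (((j:ℝ)-k)*t))/2 := by
    intro t
    have h1 : ((j:ℝ)+k)*t = j*t + k*t := by ring
    have h2 : ((j:ℝ)-k)*t = j*t - k*t := by ring
    rw [h1, h2, Real.cos_add, Real.cos_sub]
    ring
  have hrw : ∫ t in (0:ℝ)..π, Real.cos (j*t) * Real.cos (k*t)
      = ∫ t in (0:ℝ)..π, (Real.cos (((j:ℝ)+k)*t) + Real.cos (((j:ℝ)-k)*t))/2 := by
    apply intervalIntegral.integral_congr
    intro t _
    exact hid t
  rw [hrw]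
  have hint : ∀ c : ℝ, IntervalIntegrable (fun t => Real.cos (c*t)) volume 0 π := by
    intro c
    exact (Real.continuous_cos.comp (continuous_const.mul continuous_id)).intervalIntegrable _ _
  have hsplit : ∫ t in (0:ℝ)..π, (Real.cos (((j:ℝ)+k)*t) + Real.cos (((j:ℝ)-k)*t))/2
      = ((∫ t in (0:ℝ)..π, Real.cos (((j:ℝ)+k)*t)) + ∫ t in (0:ℝ)..π, Real.cos (((j:ℝ)-k)*t))/2 := by
    rw [← intervalIntegral.integral_add (hint _) (hint _)]
    rw [← intervalIntegral.integral_div]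
  rw [hsplit]
  by_cases hjk : j = k
  · subst hjk
    by_cases hj : j = 0
    · subst hj
      norm_num
    · have hj' : ((j:ℝ) + j) ≠ 0 := by
        have : (0:ℝ) < j := by exact_mod_cast Nat.pos_of_ne_zero hj
        linarith
      rw [if_pos rfl, if_neg hj]
      have e1 : ∫ t in (0:ℝ)..π, Real.cos (((j:ℝ)+j)*t) = 0 := by
        rw [cheb_integral_cos_mul hj']
        have : ((j:ℝ)+j)*π = ((2*j : ℕ) : ℝ) * π := by push_cast; ring
        rw [this, Real.sin_nat_mul_pi]
        simp
      have e2 : ∫ t in (0:ℝ)..π, Real.cos (((j:ℝ)-j)*t) = π := by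
        simp
      rw [e1, e2]
      ring
  · rw [if_neg hjk]
    have h1 : ((j:ℝ) + k) ≠ 0 ∨ (j = 0 ∧ k = 0) := by
      by_cases h : j = 0 ∧ k = 0
      · exact Or.inr h
      · left
        have : 0 < j + k := by omega
        have : (0:ℝ) < j + k := by exact_mod_cast this
        push_cast at this ⊢
        linarith
    have hadd : ((j:ℝ) + k) ≠ 0 := by
      rcases h1 with h | ⟨h, h'⟩
      · exact h
      · exact absurd (h.trans h'.symm) hjk
    have hsub : ((j:ℝ) - k) ≠ 0 := by
      intro h
      apply hjk
      have : (j:ℝ) = k := by linarith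
      exact_mod_cast this
    have e1 : ∫ t in (0:ℝ)..π, Real.cos (((j:ℝ)+k)*t) = 0 := by
      rw [cheb_integral_cos_mul hadd]
      have : ((j:ℝ)+k)*π = ((j+k : ℕ) : ℝ) * π := by push_cast; ring
      rw [this, Real.sin_nat_mul_pi]
      simp
    have e2 : ∫ t in (0:ℝ)..π, Real.cos (((j:ℝ)-k)*t) = 0 := by
      rw [cheb_integral_cos_mul hsub]
      have : ((j:ℝ)-k)*π = (((j:ℤ)-k : ℤ) : ℝ) * π := by push_cast; ring
      rw [this, Real.sin_int_mul_pi]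
      simp
    rw [e1, e2]
    ring
open Polynomial Polynomial.Chebyshev intervalIntegral

lemma cheb_sum_split (g : ℕ → ℝ) (n : ℕ) :
    ∑ k ∈ Finset.range (n+1), g k = g 0 + ∑ k ∈ Finset.Icc 1 n, g k := by
  induction n with
  | zero => simp
  | succ n ih =>
    rw [Finset.sum_range_succ, ih, Finset.sum_Icc_succ_top (by omega : 1 ≤ n+1)]
    ring

lemma cheb_eval_cos (n : ℕ) (c : ℕ → ℝ) (t : ℝ) :
    (∑ m ∈ Finset.range (n+1), C (c m) * T ℝ m).eval (Real.cos t)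
      = ∑ m ∈ Finset.range (n+1), c m * Real.cos (m * t) := by
  rw [Polynomial.eval_finset_sum]
  apply Finset.sum_congr rfl
  intro m _
  rw [Polynomial.eval_mul, Polynomial.eval_C]
  have := Polynomial.Chebyshev.T_real_cos t (m : ℤ)
  push_cast at this
  rw [this]

lemma cheb_proj (n : ℕ) (p : Polynomial ℝ) (hp : p.degree ≤ n) (θ : ℝ) :
    (1/π) * (∫ t in (0:ℝ)..π, p.eval (Real.cos t)) +
      ∑ k ∈ Finset.Icc 1 n, (2/π) * (∫ t in (0:ℝ)..π, p.eval (Real.cos t) * Real.cos (k*t))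
        * Real.cos (k*θ) = p.eval (Real.cos θ) := by
  obtain ⟨c, hc⟩ := cheb_rep n p hp
  have heval : ∀ t : ℝ, p.eval (Real.cos t) = ∑ m ∈ Finset.range (n+1), c m * Real.cos (m * t) := by
    intro t
    rw [hc, cheb_eval_cos]
  have hI : ∀ k : ℕ, (∫ t in (0:ℝ)..π, p.eval (Real.cos t) * Real.cos (k*t))
      = ∑ m ∈ Finset.range (n+1), c m * (if m = k then (if m = 0 then π else π/2) else 0) := by
    intro k
    have : ∀ t : ℝ, p.eval (Real.cos t) * Real.cos (k*t)
        = ∑ m ∈ Finset.range (n+1), c m * (Real.cos (m*t) * Real.cos (k*t)) := by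
      intro t
      rw [heval t, Finset.sum_mul]
      apply Finset.sum_congr rfl
      intro m _
      ring
    rw [intervalIntegral.integral_congr (fun t _ => this t)]
    rw [intervalIntegral.integral_finset_sum]
    · apply Finset.sum_congr rfl
      intro m _
      rw [intervalIntegral.integral_const_mul, cheb_orth m k]
    · intro m _
      apply ContinuousOn.intervalIntegrable
      apply Continuous.continuousOn
      continuity
  have hIk : ∀ k ∈ Finset.Icc 1 n, (∫ t in (0:ℝ)..π, p.eval (Real.cos t) * Real.cos (k*t))
      = c k * (π/2) := by
    intro k hk
    simp only [Finset.mem_Icc] at hk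
    rw [hI k]
    rw [Finset.sum_eq_single k]
    · rw [if_pos rfl, if_neg (by omega)]
    · intro m _ hm
      rw [if_neg hm, mul_zero]
    · intro hmem
      exfalso
      apply hmem
      simp only [Finset.mem_range]
      omega
  have hI0 : (∫ t in (0:ℝ)..π, p.eval (Real.cos t)) = c 0 * π := by
    have e : ∫ t in (0:ℝ)..π, p.eval (Real.cos t)
        = ∫ t in (0:ℝ)..π, p.eval (Real.cos t) * Real.cos ((0:ℕ)*t) := by
      apply intervalIntegral.integral_congr
      intro t _
      simp
    rw [e, hI 0]
    rw [Finset.sum_eq_single 0]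
    · simp
    · intro m _ hm
      rw [if_neg hm, mul_zero]
    · intro hmem
      simp at hmem
  have hπ : π ≠ 0 := Real.pi_ne_zero
  rw [hI0, heval θ, cheb_sum_split (fun m => c m * Real.cos (m * θ)) n]
  have : ∑ k ∈ Finset.Icc 1 n, (2/π) * (∫ t in (0:ℝ)..π, p.eval (Real.cos t) * Real.cos (k*t))
      * Real.cos (k*θ) = ∑ k ∈ Finset.Icc 1 n, c k * Real.cos (k*θ) := by
    apply Finset.sum_congr rfl
    intro k hk
    rw [hIk k hk]
    field_simp
  rw [this]
  simp
  field_simp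

noncomputable def chebD (n : ℕ) (u : ℝ) : ℝ := 1/2 + ∑ k ∈ Finset.Icc 1 n, Real.cos (k*u)

lemma chebD_continuous (n : ℕ) : Continuous (chebD n) := by
  apply Continuous.add continuous_const
  apply continuous_finset_sum
  intro k _
  exact Real.continuous_cos.comp (continuous_const.mul continuous_id)

lemma chebD_id (n : ℕ) (u : ℝ) :
    2 * Real.sin (u/2) * chebD n u = Real.sin (((n:ℝ) + 1/2) * u) := by
  induction n with
  | zero =>
    simp only [chebD, Finset.Icc_self, Finset.Icc_eq_empty_of_lt (by norm_num : (1:ℕ) > 0)]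
    rw [show ((0:ℕ):ℝ) + 1/2 = 1/2 by norm_num, show (1/2 : ℝ) * u = u/2 by ring]
    simp
    ring
  | succ n ih =>
    have hsum : chebD (n+1) u = chebD n u + Real.cos (((n:ℝ)+1)*u) := by
      simp only [chebD]
      rw [Finset.sum_Icc_succ_top (by omega : 1 ≤ n+1)]
      push_cast
      ring
    have htrig : Real.sin ((((n:ℝ)+1)*u) + u/2) - Real.sin ((((n:ℝ)+1)*u) - u/2)
        = 2 * Real.cos (((n:ℝ)+1)*u) * Real.sin (u/2) := by
      rw [Real.sin_add, Real.sin_sub]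
      ring
    have e1 : (((n:ℝ)+1)*u) + u/2 = (((n+1:ℕ):ℝ) + 1/2) * u := by push_cast; ring
    have e2 : (((n:ℝ)+1)*u) - u/2 = ((n:ℝ) + 1/2) * u := by ring
    rw [e1, e2] at htrig
    rw [hsum]
    rw [mul_add]
    rw [ih]
    linarith [htrig]

lemma cheb_abs_sin_le {x : ℝ} (hx : 0 ≤ x) : |Real.sin x| ≤ x := by
  rcases le_or_gt x 1 with h | h
  · rw [abs_of_nonneg (Real.sin_nonneg_of_nonneg_of_le_pi hx (le_trans h (by
      linarith [Real.pi_gt_three])))]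
    exact Real.sin_le hx
  · exact le_trans (Real.abs_sin_le_one x) h.le

lemma cheb_abs_sin_le_abs (x : ℝ) : |Real.sin x| ≤ |x| := by
  rcases le_or_gt 0 x with h | h
  · rw [abs_of_nonneg h]; exact cheb_abs_sin_le h
  · rw [abs_of_neg h]
    have e : |Real.sin x| = |Real.sin (-x)| := by rw [Real.sin_neg, abs_neg]
    rw [e]
    exact cheb_abs_sin_le (by linarith)

lemma cheb_inv_sin_bound {u : ℝ} (h0 : 0 < u) (hπ : u ≤ π) :
    1/(2*Real.sin (u/2)) ≤ 1/u + (π-2)/4 := by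
  have hs0 : 0 < Real.sin (u/2) := Real.sin_pos_of_pos_of_lt_pi (by linarith)
    (by linarith [Real.pi_gt_three])
  rcases le_or_gt 2 u with h2 | h2
  · -- Jordan case
    have hj : u/π ≤ Real.sin (u/2) := by
      have := Real.mul_le_sin (x := u/2) (by linarith) (by linarith)
      calc u/π = 2/π * (u/2) := by ring
        _ ≤ Real.sin (u/2) := this
    have huπ : 0 < u/π := div_pos h0 Real.pi_pos
    have step1 : 1/(2*Real.sin (u/2)) ≤ 1/(2*(u/π)) := by
      apply one_div_le_one_div_of_le (by positivity) (by linarith)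
    have e : 1/(2*(u/π)) = 1/u + (π-2)/(2*u) := by
      field_simp
      ring
    have step2 : (π-2)/(2*u) ≤ (π-2)/4 := by
      gcongr
      · linarith [Real.pi_gt_three]
      · linarith
    rw [e] at step1
    linarith
  · -- Taylor case
    set t := u/2 with ht
    have ht0 : 0 < t := by simp [ht]; linarith
    have ht1 : t ≤ 1 := by simp [ht]; linarith
    have hcube := Real.sin_gt_sub_cube ht0
    set s := Real.sin t with hs
    have ht3 : t^3 ≤ t := by nlinarith [sq_nonneg (1-t), sq_nonneg t]
    have hs34 : 3*t/4 ≤ s := by nlinarith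
    have key : 3*(t - s) ≤ s*t := by
      have hA : t - s < t^3/4 := by linarith [pow_pos ht0 3]
      have hB : t^3 ≤ t^2 := by nlinarith [sq_nonneg t]
      have hC : 3*t^2/4 ≤ s*t := by nlinarith [mul_le_mul_of_nonneg_right hs34 ht0.le]
      linarith
    have e : 1/(2*s) = 1/(2*t) + (t-s)/(2*s*t) := by
      field_simp
      ring
    have step : (t-s)/(2*s*t) ≤ 1/6 := by
      rw [div_le_iff₀ (by positivity)]
      nlinarith
    have h16 : (1:ℝ)/6 ≤ (π-2)/4 := by
      linarith [Real.pi_gt_three]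
    have hu : 1/u = 1/(2*t) := by rw [ht]; field_simp
    rw [hu]
    linarith

lemma chebD_bound {n : ℕ} {u : ℝ} (h0 : 0 < u) (hπ : u ≤ π) :
    |chebD n u| ≤ |Real.sin (((n:ℝ) + 1/2) * u)|/u + (π-2)/4 := by
  have hs0 : 0 < Real.sin (u/2) := Real.sin_pos_of_pos_of_lt_pi (by linarith)
    (by linarith [Real.pi_gt_three])
  have hD : chebD n u = Real.sin (((n:ℝ) + 1/2) * u) / (2 * Real.sin (u/2)) := by
    rw [eq_div_iff (ne_of_gt (by positivity : (0:ℝ) < 2 * Real.sin (u/2)))]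
    linear_combination chebD_id n u
  rw [hD, abs_div, abs_of_pos (by positivity : (0:ℝ) < 2 * Real.sin (u/2))]
  have hb := cheb_inv_sin_bound h0 hπ
  have habs : |Real.sin (((n:ℝ) + 1/2) * u)| ≤ 1 := Real.abs_sin_le_one _
  have habs0 : 0 ≤ |Real.sin (((n:ℝ) + 1/2) * u)| := abs_nonneg _
  calc |Real.sin (((n:ℝ) + 1/2) * u)| / (2 * Real.sin (u/2))
      = |Real.sin (((n:ℝ) + 1/2) * u)| * (1/(2 * Real.sin (u/2))) := by ring
    _ ≤ |Real.sin (((n:ℝ) + 1/2) * u)| * (1/u + (π-2)/4) := by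
        apply mul_le_mul_of_nonneg_left hb habs0
    _ = |Real.sin (((n:ℝ) + 1/2) * u)|/u + |Real.sin (((n:ℝ) + 1/2) * u)| * ((π-2)/4) := by ring
    _ ≤ |Real.sin (((n:ℝ) + 1/2) * u)|/u + (π-2)/4 := by
        have : |Real.sin (((n:ℝ) + 1/2) * u)| * ((π-2)/4) ≤ 1 * ((π-2)/4) := by
          apply mul_le_mul_of_nonneg_right habs
          linarith [Real.pi_gt_three]
        linarith

lemma cheb_F_abs_le_one (v : ℝ) : |(|Real.sin v|/v)| ≤ 1 := by
  by_cases hv : v = 0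
  · simp [hv]
  · rw [abs_div, abs_abs]
    rw [div_le_one (abs_pos.mpr hv)]
    exact cheb_abs_sin_le_abs v

lemma cheb_F_int (a b : ℝ) : IntervalIntegrable (fun v => |Real.sin v|/v) volume a b := by
  rw [intervalIntegrable_iff]
  apply Measure.integrableOn_of_bounded (M := 1)
  · exact (measure_Ioc_lt_top).ne
  · exact ((Real.continuous_sin.abs.measurable).div measurable_id).aestronglyMeasurable
  · apply ae_of_all
    intro v
    rw [Real.norm_eq_abs]
    exact cheb_F_abs_le_one v

lemma cheb_B1_int (N : ℝ) (hN : 0 < N) (a b : ℝ) :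
    IntervalIntegrable (fun u => |Real.sin (N*u)|/u) volume a b := by
  rw [intervalIntegrable_iff]
  apply Measure.integrableOn_of_bounded (M := N)
  · exact (measure_Ioc_lt_top).ne
  · exact (((Real.continuous_sin.comp (continuous_const.mul continuous_id)).abs.measurable).div
      measurable_id).aestronglyMeasurable
  · apply ae_of_all
    intro u
    rw [Real.norm_eq_abs]
    by_cases hu : u = 0
    · simp [hu]; linarith
    · rw [abs_div, abs_abs, div_le_iff₀ (abs_pos.mpr hu)]
      calc |Real.sin (N*u)| ≤ |N*u| := cheb_abs_sin_le_abs _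
        _ = N * |u| := by rw [abs_mul, abs_of_pos hN]

lemma cheb_sin_period : Function.Periodic (fun v : ℝ => |Real.sin v|) π := by
  intro v
  simp [Real.sin_add_pi]

lemma cheb_int_abs_sin (k : ℕ) : ∫ v in ((k:ℝ)*π)..(((k:ℝ)+1)*π), |Real.sin v| = 2 := by
  have h1 : (((k:ℝ)+1)*π) = (k:ℝ)*π + π := by ring
  rw [h1, cheb_sin_period.intervalIntegral_add_eq ((k:ℝ)*π) 0, zero_add]
  have h2 : ∫ v in (0:ℝ)..π, |Real.sin v| = ∫ v in (0:ℝ)..π, Real.sin v := by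
    apply intervalIntegral.integral_congr
    intro v hv
    rw [Set.uIcc_of_le Real.pi_pos.le] at hv
    exact abs_of_nonneg (Real.sin_nonneg_of_nonneg_of_le_pi hv.1 hv.2)
  rw [h2, integral_sin]
  norm_num

lemma cheb_lebesgue (n : ℕ) (hn : 1 ≤ n) :
    (2/π) * ∫ u in (0:ℝ)..π, |chebD n u| ≤ 3 + (4/π^2) * Real.log n := by
  set c : ℝ := (π-2)/4 with hc
  set N : ℝ := (n:ℝ) + 1/2 with hN
  have hc0 : 0 ≤ c := by rw [hc]; linarith [Real.pi_gt_three]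
  have hN0 : (0:ℝ) < N := by rw [hN]; positivity
  have hB1int : IntervalIntegrable (fun u => |Real.sin (N*u)|/u) volume 0 π := cheb_B1_int N hN0 0 π
  have hint1 : IntervalIntegrable (fun u => |chebD n u|) volume 0 π :=
    ((chebD_continuous n).abs).intervalIntegrable _ _
  have hint2 : IntervalIntegrable (fun u => |Real.sin (N*u)|/u + c) volume 0 π :=
    hB1int.add intervalIntegrable_const
  -- step 1 : compare with the de-singularized bound
  have hmono : (∫ u in (0:ℝ)..π, |chebD n u|) ≤ ∫ u in (0:ℝ)..π, (|Real.sin (N*u)|/u + c) := by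
    apply intervalIntegral.integral_mono_ae_restrict Real.pi_pos.le hint1 hint2
    have h0ne : ∀ᵐ (u:ℝ) ∂volume, u ≠ 0 := by
      rw [MeasureTheory.ae_iff]
      have : {u : ℝ | ¬ u ≠ 0} = {0} := by ext u; simp
      rw [this]
      exact Real.volume_singleton
    filter_upwards [MeasureTheory.ae_restrict_mem measurableSet_Icc,
      MeasureTheory.ae_restrict_of_ae h0ne] with u hu hune
    have h0u : 0 < u := lt_of_le_of_ne hu.1 (Ne.symm hune)
    exact chebD_bound h0u hu.2
  -- step 2 : split the integral
  have hsplit : (∫ u in (0:ℝ)..π, (|Real.sin (N*u)|/u + c))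
      = (∫ u in (0:ℝ)..π, |Real.sin (N*u)|/u) + π * c := by
    rw [intervalIntegral.integral_add hB1int intervalIntegrable_const,
      intervalIntegral.integral_const]
    simp [smul_eq_mul]
    try ring
  -- step 3 : change of variables v = N u
  have hcomp : (∫ u in (0:ℝ)..π, |Real.sin (N*u)|/u) = ∫ v in (0:ℝ)..(N*π), |Real.sin v|/v := by
    have hfun : ∀ u : ℝ, |Real.sin (N*u)|/u = N * (|Real.sin (N*u)|/(N*u)) := by
      intro u
      rw [← mul_div_assoc, mul_div_mul_left _ _ hN0.ne']
    rw [intervalIntegral.integral_congr (g := fun u => N * (|Real.sin (N*u)|/(N*u)))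
      (fun u _ => hfun u)]
    rw [intervalIntegral.integral_const_mul]
    rw [intervalIntegral.integral_comp_mul_left (fun v => |Real.sin v|/v) hN0.ne']
    rw [smul_eq_mul, mul_zero, ← mul_assoc, mul_inv_cancel₀ hN0.ne', one_mul]
  -- step 4 : extend to (n+1)π
  have hNle : N*π ≤ ((n:ℝ)+1)*π := by
    apply mul_le_mul_of_nonneg_right _ Real.pi_pos.le
    rw [hN]; linarith
  have hext : (∫ v in (0:ℝ)..(N*π), |Real.sin v|/v) ≤ ∫ v in (0:ℝ)..(((n:ℝ)+1)*π), |Real.sin v|/v := by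
    have hadj := intervalIntegral.integral_add_adjacent_intervals
      (cheb_F_int 0 (N*π)) (cheb_F_int (N*π) (((n:ℝ)+1)*π))
    have hnn : 0 ≤ ∫ v in (N*π)..(((n:ℝ)+1)*π), |Real.sin v|/v := by
      apply intervalIntegral.integral_nonneg hNle
      intro v hv
      have : 0 < v := lt_of_lt_of_le (by positivity) hv.1
      positivity
    linarith
  -- step 5 : decompose into periods
  have hdecomp : (∫ v in (0:ℝ)..(((n:ℝ)+1)*π), |Real.sin v|/v)
      = ∑ k ∈ Finset.range (n+1), ∫ v in ((k:ℝ)*π)..(((k:ℝ)+1)*π), |Real.sin v|/v := by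
    have := intervalIntegral.sum_integral_adjacent_intervals (a := fun k : ℕ => (k:ℝ)*π)
      (μ := volume) (n := n+1) (f := fun v => |Real.sin v|/v) (fun k _ => cheb_F_int _ _)
    simp only [Nat.cast_zero, zero_mul] at this
    push_cast at this
    rw [← this]
  -- first period
  have hterm0 : (∫ v in (((0:ℕ):ℝ)*π)..((((0:ℕ):ℝ)+1)*π), |Real.sin v|/v) ≤ π := by
    have h01 : (((0:ℕ):ℝ)*π) = 0 := by norm_num
    have h11 : ((((0:ℕ):ℝ)+1)*π) = π := by norm_num
    rw [h01, h11]
    have : (∫ v in (0:ℝ)..π, |Real.sin v|/v) ≤ ∫ v in (0:ℝ)..π, (1:ℝ) := by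
      apply intervalIntegral.integral_mono_on Real.pi_pos.le (cheb_F_int 0 π)
        intervalIntegrable_const
      intro v _
      exact le_trans (le_abs_self _) (cheb_F_abs_le_one v)
    simpa using this
  -- later periods
  have hterm : ∀ k ∈ Finset.Icc 1 n, (∫ v in ((k:ℝ)*π)..(((k:ℝ)+1)*π), |Real.sin v|/v)
      ≤ 2/((k:ℝ)*π) := by
    intro k hk
    simp only [Finset.mem_Icc] at hk
    have hk0 : (0:ℝ) < (k:ℝ) := by exact_mod_cast hk.1
    have hkπ : (0:ℝ) < (k:ℝ)*π := by positivity
    have hle : (k:ℝ)*π ≤ ((k:ℝ)+1)*π := by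
      apply mul_le_mul_of_nonneg_right _ Real.pi_pos.le
      push_cast; linarith
    have hmono2 : (∫ v in ((k:ℝ)*π)..(((k:ℝ)+1)*π), |Real.sin v|/v)
        ≤ ∫ v in ((k:ℝ)*π)..(((k:ℝ)+1)*π), |Real.sin v| * (1/((k:ℝ)*π)) := by
      apply intervalIntegral.integral_mono_on hle (cheb_F_int _ _)
        ((Real.continuous_sin.abs.mul continuous_const).intervalIntegrable _ _)
      intro v hv
      have hv1 : (k:ℝ)*π ≤ v := hv.1
      have hv0 : 0 < v := lt_of_lt_of_le hkπ hv1
      show |Real.sin v| / v ≤ |Real.sin v| * (1/((k:ℝ)*π))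
      rw [div_eq_mul_inv, mul_comm (|Real.sin v|) (1/((k:ℝ)*π)), mul_comm (|Real.sin v|)]
      rw [one_div]
      apply mul_le_mul_of_nonneg_right _ (abs_nonneg _)
      exact inv_anti₀ hkπ hv1
    rw [intervalIntegral.integral_mul_const, cheb_int_abs_sin k] at hmono2
    calc (∫ v in ((k:ℝ)*π)..(((k:ℝ)+1)*π), |Real.sin v|/v) ≤ 2 * (1/((k:ℝ)*π)) := hmono2
      _ = 2/((k:ℝ)*π) := by ring
  -- harmonic sum
  have hharm : ∑ k ∈ Finset.Icc 1 n, 2/((k:ℝ)*π) ≤ (2/π) * (1 + Real.log n) := by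
    have e1 : ∑ k ∈ Finset.Icc 1 n, 2/((k:ℝ)*π) = (2/π) * ∑ k ∈ Finset.Icc 1 n, ((k:ℝ))⁻¹ := by
      rw [Finset.mul_sum]
      apply Finset.sum_congr rfl
      intro k hk
      simp only [Finset.mem_Icc] at hk
      have : (k:ℝ) ≠ 0 := by exact_mod_cast (by omega : k ≠ 0)
      field_simp
    have e2 : ∑ k ∈ Finset.Icc 1 n, ((k:ℝ))⁻¹ = ((harmonic n : ℚ) : ℝ) := by
      rw [harmonic_eq_sum_Icc]
      push_cast
      rfl
    rw [e1, e2]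
    apply mul_le_mul_of_nonneg_left (harmonic_le_one_add_log n) (by positivity)
  -- assemble
  have hsum2 : ∑ k ∈ Finset.range (n+1), (∫ v in ((k:ℝ)*π)..(((k:ℝ)+1)*π), |Real.sin v|/v)
      ≤ π + (2/π) * (1 + Real.log n) := by
    rw [cheb_sum_split (fun k => ∫ v in ((k:ℝ)*π)..(((k:ℝ)+1)*π), |Real.sin v|/v) n]
    exact add_le_add hterm0 (le_trans (Finset.sum_le_sum hterm) hharm)
  have hJ : (∫ u in (0:ℝ)..π, |chebD n u|) ≤ π + (2/π) * (1 + Real.log n) + π * c := by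
    rw [hsplit, hcomp] at hmono
    calc (∫ u in (0:ℝ)..π, |chebD n u|)
        ≤ (∫ v in (0:ℝ)..(N*π), |Real.sin v|/v) + π * c := hmono
      _ ≤ (∫ v in (0:ℝ)..(((n:ℝ)+1)*π), |Real.sin v|/v) + π * c := by linarith
      _ = (∑ k ∈ Finset.range (n+1), ∫ v in ((k:ℝ)*π)..(((k:ℝ)+1)*π), |Real.sin v|/v) + π * c := by
          rw [hdecomp]
      _ ≤ π + (2/π) * (1 + Real.log n) + π * c := by linarith [hsum2]
  -- final arithmetic
  have hπ0 : (0:ℝ) < π := Real.pi_pos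
  have hexp : (2/π) * (π + (2/π) * (1 + Real.log n) + π * c)
      = 2 + (4/π^2) * (1 + Real.log n) + 2 * c := by
    field_simp
    ring
  have harith : 4/π^2 + 2*c ≤ 1 := by
    rw [hc]
    have h1 : (3.14:ℝ)^2 ≤ π^2 := by nlinarith [Real.pi_gt_d2]
    have h2 : 4/π^2 ≤ 4/(3.14:ℝ)^2 := by
      apply div_le_div_of_nonneg_left (by norm_num) (by positivity) h1
    have h3 : (π-2)/2 ≤ ((3.15:ℝ)-2)/2 := by linarith [Real.pi_lt_d2]
    have : 2*((π-2)/4) = (π-2)/2 := by ring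
    rw [this]
    norm_num at h2 h3 ⊢
    linarith
  calc (2/π) * ∫ u in (0:ℝ)..π, |chebD n u|
      ≤ (2/π) * (π + (2/π) * (1 + Real.log n) + π * c) := by
        apply mul_le_mul_of_nonneg_left hJ (by positivity)
    _ = 2 + (4/π^2) * (1 + Real.log n) + 2 * c := hexp
    _ = (2 + 4/π^2 + 2*c) + (4/π^2) * Real.log n := by ring
    _ ≤ 3 + (4/π^2) * Real.log n := by linarith [harith]

lemma chebD_periodic (n : ℕ) : Function.Periodic (fun u => |chebD n u|) (2*π) := by
  intro u
  simp only [chebD]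
  congr 2
  apply Finset.sum_congr rfl
  intro k _
  have e : (k:ℝ)*(u+2*π) = (k:ℝ)*u + (k:ℤ)*(2*π) := by push_cast; ring
  rw [e, Real.cos_add_int_mul_two_pi]

lemma chebD_even (n : ℕ) (u : ℝ) : chebD n (-u) = chebD n u := by
  simp only [chebD]
  congr 1
  apply Finset.sum_congr rfl
  intro k _
  rw [show (k:ℝ)*(-u) = -((k:ℝ)*u) by ring, Real.cos_neg]

lemma cheb_intD_theta (n : ℕ) (θ : ℝ) :
    (∫ t in (0:ℝ)..π, (|chebD n (θ-t)| + |chebD n (θ+t)|)/2)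
      = ∫ u in (0:ℝ)..π, |chebD n u| := by
  have hDc : Continuous (fun u => |chebD n u|) := (chebD_continuous n).abs
  have hint : ∀ a b : ℝ, IntervalIntegrable (fun u => |chebD n u|) volume a b :=
    fun a b => hDc.intervalIntegrable a b
  have h1 : (∫ t in (0:ℝ)..π, |chebD n (θ-t)|) = ∫ u in (θ-π)..θ, |chebD n u| := by
    have := intervalIntegral.integral_comp_sub_left (a := (0:ℝ)) (b := π)
      (fun u => |chebD n u|) θ
    simpa using this
  have h2 : (∫ t in (0:ℝ)..π, |chebD n (θ+t)|) = ∫ u in θ..(θ+π), |chebD n u| := by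
    have := intervalIntegral.integral_comp_add_left (a := (0:ℝ)) (b := π)
      (fun u => |chebD n u|) θ
    simpa using this
  have hadj : (∫ u in (θ-π)..θ, |chebD n u|) + (∫ u in θ..(θ+π), |chebD n u|)
      = ∫ u in (θ-π)..(θ+π), |chebD n u| :=
    intervalIntegral.integral_add_adjacent_intervals (hint _ _) (hint _ _)
  have hper : (∫ u in (θ-π)..(θ+π), |chebD n u|) = ∫ u in (-π)..π, |chebD n u| := by
    have := (chebD_periodic n).intervalIntegral_add_eq (θ-π) (-π)
    rw [show θ-π+2*π = θ+π by ring, show -π+2*π = π by ring] at this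
    exact this
  have heven : (∫ u in (-π)..(0:ℝ), |chebD n u|) = ∫ u in (0:ℝ)..π, |chebD n u| := by
    have := intervalIntegral.integral_comp_neg (a := (0:ℝ)) (b := π) (fun u => |chebD n u|)
    simp only [neg_zero] at this
    rw [← this]
    apply intervalIntegral.integral_congr
    intro t _
    simp [chebD_even]
  have hsplit2 : (∫ u in (-π)..(0:ℝ), |chebD n u|) + (∫ u in (0:ℝ)..π, |chebD n u|)
      = ∫ u in (-π)..π, |chebD n u| :=
    intervalIntegral.integral_add_adjacent_intervals (hint _ _) (hint _ _)
  have hintc1 : IntervalIntegrable (fun t => |chebD n (θ-t)|) volume 0 π :=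
    (hDc.comp (continuous_const.sub continuous_id)).intervalIntegrable _ _
  have hintc2 : IntervalIntegrable (fun t => |chebD n (θ+t)|) volume 0 π :=
    (hDc.comp (continuous_const.add continuous_id)).intervalIntegrable _ _
  calc (∫ t in (0:ℝ)..π, (|chebD n (θ-t)| + |chebD n (θ+t)|)/2)
      = ((∫ t in (0:ℝ)..π, |chebD n (θ-t)|) + ∫ t in (0:ℝ)..π, |chebD n (θ+t)|)/2 := by
        rw [← intervalIntegral.integral_add hintc1 hintc2, ← intervalIntegral.integral_div]
    _ = (∫ u in (-π)..π, |chebD n u|)/2 := by rw [h1, h2, hadj, hper]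
    _ = ∫ u in (0:ℝ)..π, |chebD n u| := by
        rw [← hsplit2, heven]
        ring

lemma cheb_kernel_bound (n : ℕ) (g : ℝ → ℝ) (hg : Continuous g) (M : ℝ)
    (hgM : ∀ t : ℝ, |g t| ≤ M) (θ : ℝ) :
    |(1/π) * (∫ t in (0:ℝ)..π, g t) + ∑ k ∈ Finset.Icc 1 n,
        (2/π) * (∫ t in (0:ℝ)..π, g t * Real.cos (k*t)) * Real.cos (k*θ)|
      ≤ M * ((2/π) * ∫ u in (0:ℝ)..π, |chebD n u|) := by
  set K : ℝ → ℝ := fun t => 1/2 + ∑ k ∈ Finset.Icc 1 n, Real.cos (k*θ) * Real.cos (k*t) with hK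
  have hKcont : Continuous K := by
    apply Continuous.add continuous_const
    apply continuous_finset_sum
    intro k _
    exact continuous_const.mul (Real.continuous_cos.comp (continuous_const.mul continuous_id))
  have hM0 : 0 ≤ M := le_trans (abs_nonneg (g 0)) (hgM 0)
  -- rewrite the expression as a single integral
  have hrw : (1/π) * (∫ t in (0:ℝ)..π, g t) + ∑ k ∈ Finset.Icc 1 n,
      (2/π) * (∫ t in (0:ℝ)..π, g t * Real.cos (k*t)) * Real.cos (k*θ)
      = (2/π) * ∫ t in (0:ℝ)..π, g t * K t := by
    have hpoint : ∀ t : ℝ, g t * K t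
        = g t * (1/2) + ∑ k ∈ Finset.Icc 1 n, Real.cos (k*θ) * (g t * Real.cos (k*t)) := by
      intro t
      rw [hK]
      simp only []
      rw [mul_add, Finset.mul_sum]
      congr 1
      apply Finset.sum_congr rfl
      intro k _
      ring
    rw [intervalIntegral.integral_congr (g := fun t => g t * (1/2)
      + ∑ k ∈ Finset.Icc 1 n, Real.cos (k*θ) * (g t * Real.cos (k*t))) (fun t _ => hpoint t)]
    have hgint : IntervalIntegrable (fun t => g t * (1/2)) volume 0 π :=
      (hg.mul continuous_const).intervalIntegrable _ _
    have hsint : IntervalIntegrable (fun t => ∑ k ∈ Finset.Icc 1 n,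
        Real.cos (k*θ) * (g t * Real.cos (k*t))) volume 0 π := by
      apply (Continuous.intervalIntegrable ?_ _ _)
      apply continuous_finset_sum
      intro k _
      exact continuous_const.mul (hg.mul
        (Real.continuous_cos.comp (continuous_const.mul continuous_id)))
    rw [intervalIntegral.integral_add hgint hsint]
    have hi : ∀ k ∈ Finset.Icc 1 n, IntervalIntegrable
        (fun t => Real.cos (k*θ) * (g t * Real.cos (k*t))) volume 0 π := by
      intro k _
      apply Continuous.intervalIntegrable
      exact continuous_const.mul (hg.mul
        (Real.continuous_cos.comp (continuous_const.mul continuous_id)))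
    rw [intervalIntegral.integral_finset_sum hi]
    simp only [intervalIntegral.integral_const_mul, intervalIntegral.integral_mul_const]
    rw [mul_add, Finset.mul_sum]
    congr 1
    · ring
    · apply Finset.sum_congr rfl
      intro k _
      ring
  rw [hrw]
  -- pointwise kernel identity
  have hKid : ∀ t : ℝ, K t = (chebD n (θ-t) + chebD n (θ+t))/2 := by
    intro t
    rw [hK]
    simp only [chebD]
    have hterm2 : ∀ k ∈ Finset.Icc 1 n, Real.cos (k*θ) * Real.cos (k*t)
        = (Real.cos (k*(θ-t)) + Real.cos (k*(θ+t)))/2 := by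
      intro k _
      rw [show (k:ℝ)*(θ-t) = k*θ - k*t by ring, show (k:ℝ)*(θ+t) = k*θ + k*t by ring,
        Real.cos_sub, Real.cos_add]
      ring
    rw [Finset.sum_congr rfl hterm2, ← Finset.sum_div, Finset.sum_add_distrib]
    ring
  have hKabs : ∀ t : ℝ, |K t| ≤ (|chebD n (θ-t)| + |chebD n (θ+t)|)/2 := by
    intro t
    rw [hKid t]
    calc |(chebD n (θ-t) + chebD n (θ+t))/2| = |chebD n (θ-t) + chebD n (θ+t)|/2 := by
          rw [abs_div]; norm_num
      _ ≤ (|chebD n (θ-t)| + |chebD n (θ+t)|)/2 := by gcongr; exact abs_add_le _ _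
  have hDc : Continuous (fun u => |chebD n u|) := (chebD_continuous n).abs
  have habs1 : |∫ t in (0:ℝ)..π, g t * K t| ≤ ∫ t in (0:ℝ)..π, |g t * K t| :=
    intervalIntegral.abs_integral_le_integral_abs Real.pi_pos.le
  have hmono1 : (∫ t in (0:ℝ)..π, |g t * K t|) ≤ ∫ t in (0:ℝ)..π, M * |K t| := by
    apply intervalIntegral.integral_mono_on Real.pi_pos.le
      ((hg.mul hKcont).abs.intervalIntegrable _ _)
      ((continuous_const.mul hKcont.abs).intervalIntegrable _ _)
    intro t _
    show |g t * K t| ≤ M * |K t|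
    rw [abs_mul]
    exact mul_le_mul_of_nonneg_right (hgM t) (abs_nonneg _)
  have hmono2 : (∫ t in (0:ℝ)..π, |K t|) ≤ ∫ t in (0:ℝ)..π, (|chebD n (θ-t)| + |chebD n (θ+t)|)/2 := by
    apply intervalIntegral.integral_mono_on Real.pi_pos.le
      (hKcont.abs.intervalIntegrable _ _)
      ((((hDc.comp (continuous_const.sub continuous_id)).add
        (hDc.comp (continuous_const.add continuous_id))).div_const 2).intervalIntegrable _ _)
    intro t _
    exact hKabs t
  have hKint : (∫ t in (0:ℝ)..π, |K t|) ≤ ∫ u in (0:ℝ)..π, |chebD n u| := by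
    rw [← cheb_intD_theta n θ]
    exact hmono2
  have hconst : (∫ t in (0:ℝ)..π, M * |K t|) = M * ∫ t in (0:ℝ)..π, |K t| :=
    intervalIntegral.integral_const_mul _ _
  calc |(2/π) * ∫ t in (0:ℝ)..π, g t * K t| = (2/π) * |∫ t in (0:ℝ)..π, g t * K t| := by
        rw [abs_mul, abs_of_pos (by positivity : (0:ℝ) < 2/π)]
    _ ≤ (2/π) * (M * ∫ u in (0:ℝ)..π, |chebD n u|) := by
        apply mul_le_mul_of_nonneg_left _ (by positivity : (0:ℝ) ≤ 2/π)
        calc |∫ t in (0:ℝ)..π, g t * K t| ≤ ∫ t in (0:ℝ)..π, |g t * K t| := habs1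
          _ ≤ ∫ t in (0:ℝ)..π, M * |K t| := hmono1
          _ = M * ∫ t in (0:ℝ)..π, |K t| := hconst
          _ ≤ M * ∫ u in (0:ℝ)..π, |chebD n u| := mul_le_mul_of_nonneg_left hKint hM0
    _ = M * ((2/π) * ∫ u in (0:ℝ)..π, |chebD n u|) := by ring

/-- Chebyshev truncation is near-best: for `f` continuous on `[-1,1]` with
degree-`n` Chebyshev truncation `f_n` and best uniform approximation `p_n^*` of
degree `n`, `‖f - f_n‖_∞ ≤ (4 + (4/π²) ln n) ‖f - p_n^*‖_∞` for `n > 1`. -/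
theorem chebyshev_truncation_near_best (f : ℝ → ℝ)
    (hf : ContinuousOn f (Set.Icc (-1 : ℝ) 1)) (n : ℕ) (hn : 1 < n)
    (a : ℕ → ℝ)
    (ha : ∀ k, a k = (2 / π) * ∫ x in (-1 : ℝ)..1,
      f x * (Polynomial.Chebyshev.T ℝ k).eval x / Real.sqrt (1 - x ^ 2))
    (p : Polynomial ℝ) (hpdeg : p.degree ≤ n)
    (hbest : ∀ q : Polynomial ℝ, q.degree ≤ n →
      (⨆ x : Set.Icc (-1 : ℝ) 1, |f x - p.eval (x : ℝ)|) ≤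
        ⨆ x : Set.Icc (-1 : ℝ) 1, |f x - q.eval (x : ℝ)|) :
    (⨆ x : Set.Icc (-1 : ℝ) 1,
        |f x - (a 0 / 2 + ∑ k ∈ Finset.Icc 1 n,
          a k * (Polynomial.Chebyshev.T ℝ k).eval (x : ℝ))|) ≤
      (4 + (4 / π ^ 2) * Real.log n) * ⨆ x : Set.Icc (-1 : ℝ) 1, |f x - p.eval (x : ℝ)| := by
  have hIccne : (Set.Icc (-1:ℝ) 1).Nonempty := ⟨0, by norm_num⟩
  haveI : Nonempty (Set.Icc (-1:ℝ) 1) := hIccne.to_subtype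
  set M : ℝ := ⨆ x : Set.Icc (-1 : ℝ) 1, |f x - p.eval (x : ℝ)| with hM
  have hcontfp : ContinuousOn (fun y => |f y - p.eval y|) (Set.Icc (-1:ℝ) 1) :=
    (hf.sub (Polynomial.continuousOn p)).abs
  have hbdd : BddAbove (Set.range fun x : Set.Icc (-1:ℝ) 1 => |f x - p.eval (x:ℝ)|) := by
    have himg := (isCompact_Icc.image_of_continuousOn hcontfp).bddAbove
    rwa [Set.image_eq_range] at himg
  have hMb : ∀ y ∈ Set.Icc (-1:ℝ) 1, |f y - p.eval y| ≤ M := fun y hy =>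
    le_ciSup hbdd (⟨y, hy⟩ : Set.Icc (-1:ℝ) 1)
  have hM0 : 0 ≤ M := le_trans (abs_nonneg _) (hMb 0 (by norm_num))
  set G : ℝ → ℝ := fun t => f (Real.cos t) - p.eval (Real.cos t) with hG
  have hfc : Continuous (fun t => f (Real.cos t)) :=
    hf.comp_continuous Real.continuous_cos
      (fun t => ⟨Real.neg_one_le_cos t, Real.cos_le_one t⟩)
  have hpc : Continuous (fun t => p.eval (Real.cos t)) :=
    (Polynomial.continuous p).comp Real.continuous_cos
  have hGcont : Continuous G := hfc.sub hpc
  have hGM : ∀ t : ℝ, |G t| ≤ M := fun t =>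
    hMb (Real.cos t) ⟨Real.neg_one_le_cos t, Real.cos_le_one t⟩
  -- coefficient formula in the θ variable
  have hak : ∀ k : ℕ, a k = (2/π) * ∫ t in (0:ℝ)..π, f (Real.cos t) * Real.cos (k * t) := by
    intro k
    rw [ha k]
    congr 1
    have hsub := cheb_subst (fun x => f x * (Polynomial.Chebyshev.T ℝ k).eval x)
    rw [hsub]
    apply intervalIntegral.integral_congr
    intro t _
    have hT := Polynomial.Chebyshev.T_real_cos t (k : ℤ)
    push_cast at hT
    simp only [hT]
  -- integrability of pieces
  have hGint : ∀ k : ℕ, IntervalIntegrable (fun t => G t * Real.cos (k*t)) volume 0 π :=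
    fun k => (hGcont.mul (Real.continuous_cos.comp
      (continuous_const.mul continuous_id))).intervalIntegrable _ _
  have hPint : ∀ k : ℕ, IntervalIntegrable (fun t => p.eval (Real.cos t) * Real.cos (k*t))
      volume 0 π := fun k => (hpc.mul (Real.continuous_cos.comp
      (continuous_const.mul continuous_id))).intervalIntegrable _ _
  have hIsplit : ∀ k : ℕ, (∫ t in (0:ℝ)..π, f (Real.cos t) * Real.cos (k*t))
      = (∫ t in (0:ℝ)..π, G t * Real.cos (k*t))
        + ∫ t in (0:ℝ)..π, p.eval (Real.cos t) * Real.cos (k*t) := by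
    intro k
    rw [← intervalIntegral.integral_add (hGint k) (hPint k)]
    apply intervalIntegral.integral_congr
    intro t _
    simp only [hG]
    ring
  have hIsplit0 : (∫ t in (0:ℝ)..π, f (Real.cos t))
      = (∫ t in (0:ℝ)..π, G t) + ∫ t in (0:ℝ)..π, p.eval (Real.cos t) := by
    rw [← intervalIntegral.integral_add (hGcont.intervalIntegrable _ _)
      (hpc.intervalIntegrable _ _)]
    apply intervalIntegral.integral_congr
    intro t _
    simp only [hG]
    ring
  have hleb := cheb_lebesgue n (by omega)
  -- pointwise bound
  have hpoint : ∀ x : Set.Icc (-1:ℝ) 1,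
      |f x - (a 0 / 2 + ∑ k ∈ Finset.Icc 1 n,
        a k * (Polynomial.Chebyshev.T ℝ k).eval (x : ℝ))|
      ≤ (4 + (4 / π ^ 2) * Real.log n) * M := by
    intro x
    set θ : ℝ := Real.arccos (x:ℝ) with hθdef
    have hθ : Real.cos θ = (x:ℝ) := Real.cos_arccos x.2.1 x.2.2
    have hseval : ∀ k : ℕ, (Polynomial.Chebyshev.T ℝ k).eval (x:ℝ) = Real.cos (k*θ) := by
      intro k
      rw [← hθ]
      have := Polynomial.Chebyshev.T_real_cos θ (k : ℤ)
      push_cast at this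
      exact this
    have ha0 : a 0 = (2/π) * ∫ t in (0:ℝ)..π, f (Real.cos t) := by
      rw [hak 0]
      congr 1
      apply intervalIntegral.integral_congr
      intro t _
      simp
    set SG : ℝ := (1/π) * (∫ t in (0:ℝ)..π, G t) + ∑ k ∈ Finset.Icc 1 n,
      (2/π) * (∫ t in (0:ℝ)..π, G t * Real.cos (k*t)) * Real.cos (k*θ) with hSG
    set SP : ℝ := (1/π) * (∫ t in (0:ℝ)..π, p.eval (Real.cos t)) + ∑ k ∈ Finset.Icc 1 n,
      (2/π) * (∫ t in (0:ℝ)..π, p.eval (Real.cos t) * Real.cos (k*t)) * Real.cos (k*θ) with hSP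
    have hform : a 0 / 2 + ∑ k ∈ Finset.Icc 1 n,
        a k * (Polynomial.Chebyshev.T ℝ k).eval (x : ℝ) = SG + SP := by
      have hterm : ∀ k ∈ Finset.Icc 1 n, a k * (Polynomial.Chebyshev.T ℝ k).eval (x : ℝ)
          = (2/π) * (∫ t in (0:ℝ)..π, G t * Real.cos (k*t)) * Real.cos (k*θ)
            + (2/π) * (∫ t in (0:ℝ)..π, p.eval (Real.cos t) * Real.cos (k*t)) * Real.cos (k*θ) := by
        intro k _
        rw [hak k, hseval k, hIsplit k]
        ring
      rw [Finset.sum_congr rfl hterm, Finset.sum_add_distrib, ha0, hIsplit0, hSG, hSP]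
      ring
    have hP : SP = p.eval (x:ℝ) := by
      rw [hSP, ← hθ]
      exact cheb_proj n p hpdeg θ
    have hGbound : |SG| ≤ M * ((2/π) * ∫ u in (0:ℝ)..π, |chebD n u|) :=
      cheb_kernel_bound n G hGcont M hGM θ
    have hdecomp : f (x:ℝ) - (a 0 / 2 + ∑ k ∈ Finset.Icc 1 n,
        a k * (Polynomial.Chebyshev.T ℝ k).eval (x : ℝ)) = (f (x:ℝ) - p.eval (x:ℝ)) - SG := by
      rw [hform, hP]
      ring
    rw [hdecomp]
    have htri : |(f (x:ℝ) - p.eval (x:ℝ)) - SG| ≤ |f (x:ℝ) - p.eval (x:ℝ)| + |SG| := by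
      rw [sub_eq_add_neg]
      refine le_trans (abs_add_le _ _) ?_
      rw [abs_neg]
    have h1 : |f (x:ℝ) - p.eval (x:ℝ)| ≤ M := hMb (x:ℝ) x.2
    have h2 : |SG| ≤ M * (3 + (4/π^2) * Real.log n) :=
      le_trans hGbound (mul_le_mul_of_nonneg_left hleb hM0)
    calc |(f (x:ℝ) - p.eval (x:ℝ)) - SG| ≤ |f (x:ℝ) - p.eval (x:ℝ)| + |SG| := htri
      _ ≤ M + M * (3 + (4/π^2) * Real.log n) := add_le_add h1 h2
      _ = (4 + (4 / π ^ 2) * Real.log n) * M := by ring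
  exact ciSup_le hpoint
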